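/- Set C := 1/20 and, for μ > 0, k₀ := (1 + Cμ)^{−1/2}, 𝒯⁻(μ) := (3/4)·log(320/μ), 𝒯⁺(μ) := π·log(640/μ). Then for every μ ∈ (0, 10⁻⁵], 𝒯⁻(μ) < 2·k₀·K(k₀) < 𝒯⁺(μ). -/

import Mathlib

open Real MeasureTheory intervalIntegral

/-- Complete elliptic integral of the first kind, K(m) = ∫₀^{π/2} (1 − m² sin²x)^{−1/2} dx. -/
noncomputable def ellK (m : ℝ) : ℝ :=
  ∫ x in (0:ℝ)..(π / 2), 1 / Real.sqrt (1 - m ^ 2 * Real.sin x ^ 2)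

section aux
lemma contInvSqrt (c : ℝ) (hc : 0 < c) :
    Continuous fun x : ℝ => 1 / Real.sqrt (x ^ 2 + c ^ 2) := by
  apply Continuous.div continuous_const
  · exact Real.continuous_sqrt.comp (by continuity)
  · intro x
    exact ne_of_gt (Real.sqrt_pos.mpr (by positivity))

lemma integral_inv_sqrt_sq_add_sq (c : ℝ) (hc : 0 < c) (b : ℝ) :
    ∫ x in (0:ℝ)..b, 1 / Real.sqrt (x ^ 2 + c ^ 2) = Real.arsinh (b / c) := by
  have hd : ∀ x ∈ Set.uIcc (0:ℝ) b,
      HasDerivAt (fun y => Real.arsinh (y / c)) (1 / Real.sqrt (x ^ 2 + c ^ 2)) x := by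
    intro x _
    have h1 : HasDerivAt (fun y : ℝ => y / c) (1 / c) x := by
      simpa using (hasDerivAt_id x).div_const c
    have h2 := (Real.hasDerivAt_arsinh (x / c)).comp x h1
    refine h2.congr_deriv ?_
    have hsq : Real.sqrt (1 + (x / c) ^ 2) = Real.sqrt (x ^ 2 + c ^ 2) / c := by
      rw [eq_div_iff (ne_of_gt hc), ← Real.sqrt_sq hc.le, ← Real.sqrt_mul (by positivity)]
      congr 1
      field_simp
      rw [Real.sqrt_sq hc.le]
      ring
    rw [hsq]
    have h3 : Real.sqrt (x ^ 2 + c ^ 2) ≠ 0 := ne_of_gt (Real.sqrt_pos.mpr (by positivity))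
    field_simp
  rw [intervalIntegral.integral_eq_sub_of_hasDerivAt hd
    ((contInvSqrt c hc).intervalIntegrable 0 b)]
  simp

lemma integral_refl_inv_sqrt (c : ℝ) (hc : 0 < c) :
    ∫ x in (0:ℝ)..(π/2), 1 / Real.sqrt ((π/2 - x) ^ 2 + c ^ 2)
      = Real.arsinh ((π/2) / c) := by
  have := intervalIntegral.integral_comp_sub_left
    (a := (0:ℝ)) (b := π/2) (fun t => 1 / Real.sqrt (t ^ 2 + c ^ 2)) (π/2)
  simp only [sub_zero, sub_self] at this
  rw [this, integral_inv_sqrt_sq_add_sq c hc]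

lemma arsinh_le_log (y : ℝ) (hy : 1/2 ≤ y) : Real.arsinh y ≤ Real.log (4 * y) := by
  rw [Real.arsinh]
  apply Real.log_le_log (by positivity)
  have h1 : Real.sqrt (1 + y ^ 2) ≤ 1 + y := by
    rw [← Real.sqrt_sq (by linarith : (0:ℝ) ≤ 1 + y)]
    apply Real.sqrt_le_sqrt
    nlinarith
  linarith

lemma log_le_arsinh (y : ℝ) (hy : 0 < y) : Real.log (2 * y) ≤ Real.arsinh y := by
  rw [Real.arsinh]
  apply Real.log_le_log (by positivity)
  have h1 : y ≤ Real.sqrt (1 + y ^ 2) := by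
    nlinarith [Real.sq_sqrt (show (0:ℝ) ≤ 1 + y ^ 2 by positivity),
      Real.sqrt_nonneg (1 + y ^ 2)]
  linarith
end aux

lemma ellK_int_pos (m : ℝ) (hm1 : m < 1) (hm0 : 0 < m) (x : ℝ) :
    0 < 1 - m ^ 2 * Real.sin x ^ 2 := by
  nlinarith [Real.sin_sq_le_one x, sq_nonneg (Real.sin x), sq_nonneg m, sq_nonneg (1 - m)]

lemma ellK_cont (m : ℝ) (hm1 : m < 1) (hm0 : 0 < m) :
    Continuous fun x : ℝ => 1 / Real.sqrt (1 - m ^ 2 * Real.sin x ^ 2) := by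
  apply Continuous.div continuous_const
  · exact Real.continuous_sqrt.comp (by continuity)
  · intro x
    exact ne_of_gt (Real.sqrt_pos.mpr (ellK_int_pos m hm1 hm0 x))

lemma ellK_lower (m : ℝ) (hm0 : 0 < m) (hm1 : m < 1) :
    Real.arsinh ((π/2) / Real.sqrt (1 - m ^ 2)) ≤ ellK m := by
  have h1m : 0 < 1 - m ^ 2 := by nlinarith
  set c := Real.sqrt (1 - m ^ 2) with hcdef
  have hc0 : 0 < c := Real.sqrt_pos.mpr h1m
  have hc2 : c ^ 2 = 1 - m ^ 2 := Real.sq_sqrt h1m.le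
  rw [ellK, ← integral_refl_inv_sqrt c hc0]
  apply intervalIntegral.integral_mono_on (by positivity)
  · exact ((contInvSqrt c hc0).comp (by continuity)).intervalIntegrable 0 (π/2)
  · exact (ellK_cont m hm1 hm0).intervalIntegrable 0 (π/2)
  · intro x hx
    have hpos := ellK_int_pos m hm1 hm0 x
    have h1 : Real.cos x ≤ π/2 - x := by
      rw [← Real.sin_pi_div_two_sub]
      exact Real.sin_le (by linarith [hx.2])
    have h2 : 0 ≤ Real.cos x := by
      apply Real.cos_nonneg_of_mem_Icc
      constructor
      · linarith [hx.1, Real.pi_pos]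
      · exact hx.2
    have hle : 1 - m ^ 2 * Real.sin x ^ 2 ≤ (π/2 - x) ^ 2 + c ^ 2 := by
      nlinarith [Real.sin_sq_add_cos_sq x, mul_self_le_mul_self h2 h1,
        sq_nonneg (Real.cos x), sq_nonneg (1 - m)]
    exact one_div_le_one_div_of_le (Real.sqrt_pos.mpr hpos) (Real.sqrt_le_sqrt hle)

lemma ellK_upper (m : ℝ) (hm0 : 0 < m) (hm1 : m < 1) (hmhalf : 1/2 ≤ m ^ 2) :
    ellK m ≤ (π / Real.sqrt 2) *
      Real.arsinh (Real.sqrt 2 / (2 * Real.sqrt (1 - m ^ 2))) := by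
  have h1m : 0 < 1 - m ^ 2 := by nlinarith
  set c := Real.sqrt (1 - m ^ 2) with hcdef
  have hc0 : 0 < c := Real.sqrt_pos.mpr h1m
  have hc2 : c ^ 2 = 1 - m ^ 2 := Real.sq_sqrt h1m.le
  have hs2 : (0:ℝ) < Real.sqrt 2 := Real.sqrt_pos.mpr (by norm_num)
  set c₂ := π * c / Real.sqrt 2 with hc₂def
  have hc₂0 : 0 < c₂ := by positivity
  have hc₂sq : 2 * c₂ ^ 2 = π ^ 2 * c ^ 2 := by
    rw [hc₂def, div_pow, Real.sq_sqrt (by norm_num : (0:ℝ) ≤ 2), mul_pow]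
    field_simp
  have harg : (π/2) / c₂ = Real.sqrt 2 / (2 * c) := by
    rw [hc₂def]
    field_simp
  have key : ellK m ≤ (π / Real.sqrt 2) * Real.arsinh ((π/2) / c₂) := by
    have hint : ∫ x in (0:ℝ)..(π/2),
        (π / Real.sqrt 2) * (1 / Real.sqrt ((π/2 - x) ^ 2 + c₂ ^ 2))
          = (π / Real.sqrt 2) * Real.arsinh ((π/2) / c₂) := by
      rw [intervalIntegral.integral_const_mul, integral_refl_inv_sqrt c₂ hc₂0]
    rw [ellK, ← hint]
    apply intervalIntegral.integral_mono_on (by positivity)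
    · exact (ellK_cont m hm1 hm0).intervalIntegrable 0 (π/2)
    · exact (continuous_const.mul
        ((contInvSqrt c₂ hc₂0).comp (by continuity))).intervalIntegrable 0 (π/2)
    · intro x hx
      have hpos := ellK_int_pos m hm1 hm0 x
      have hcs : 2/π * (π/2 - x) ≤ Real.cos x := by
        rw [← Real.sin_pi_div_two_sub]
        exact Real.mul_le_sin (by linarith [hx.2]) (by linarith [hx.1])
      have hY : 0 < (π/2 - x) ^ 2 + c₂ ^ 2 := by positivity
      have keyineq : 2 * ((π/2 - x) ^ 2 + c₂ ^ 2) ≤ π ^ 2 * (1 - m ^ 2 * Real.sin x ^ 2) := by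
        have hcs' : 2 * (π/2 - x) ≤ π * Real.cos x := by
          have h := mul_le_mul_of_nonneg_left hcs Real.pi_pos.le
          rw [show π * (2/π * (π/2 - x)) = 2 * (π/2 - x) by
            field_simp] at h
          exact h
        have hcs2 : (2 * (π/2 - x)) * (2 * (π/2 - x)) ≤ (π * Real.cos x) * (π * Real.cos x) :=
          mul_self_le_mul_self (by linarith [hx.2]) hcs'
        have hid : π ^ 2 * (1 - m ^ 2 * Real.sin x ^ 2)
            = π ^ 2 * c ^ 2 + π ^ 2 * (m ^ 2 * Real.cos x ^ 2) := by
          linear_combination (-(π ^ 2 * m ^ 2)) * Real.sin_sq_add_cos_sq x - π ^ 2 * hc2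
        nlinarith [hcs2, hmhalf, sq_nonneg (π * Real.cos x), hc₂sq, hid]
      have hs1 : Real.sqrt 2 * Real.sqrt ((π/2 - x) ^ 2 + c₂ ^ 2)
          ≤ π * Real.sqrt (1 - m ^ 2 * Real.sin x ^ 2) := by
        have := Real.sqrt_le_sqrt keyineq
        rwa [Real.sqrt_mul (by norm_num : (0:ℝ) ≤ 2),
          Real.sqrt_mul (sq_nonneg π), Real.sqrt_sq Real.pi_pos.le] at this
      have hden : 0 < Real.sqrt (1 - m ^ 2 * Real.sin x ^ 2) := Real.sqrt_pos.mpr hpos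
      have hYs : 0 < Real.sqrt ((π/2 - x) ^ 2 + c₂ ^ 2) := Real.sqrt_pos.mpr hY
      rw [show (π / Real.sqrt 2) * (1 / Real.sqrt ((π/2 - x) ^ 2 + c₂ ^ 2))
          = π / (Real.sqrt 2 * Real.sqrt ((π/2 - x) ^ 2 + c₂ ^ 2)) by
        rw [div_mul_div_comm, mul_one]]
      rw [div_le_div_iff₀ hden (by positivity)]
      nlinarith [hs1, hden.le]
  rwa [harg] at key

set_option maxHeartbeats 1000000 in
/-- With C = 1/20, k₀ = (1+Cμ)^{−1/2}, 𝒯⁻(μ) = (3/4)log(320/μ), 𝒯⁺(μ) = π log(640/μ):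
for every μ ∈ (0,10⁻⁵], 𝒯⁻(μ) < 2k₀K(k₀) < 𝒯⁺(μ). -/
theorem transition_time_bounds (μ : ℝ) (hμ : μ ∈ Set.Ioc (0:ℝ) (1/100000)) :
    (3/4 : ℝ) * Real.log (320 / μ) <
        2 * (1 + (1/20) * μ) ^ (-(1/2) : ℝ) * ellK ((1 + (1/20) * μ) ^ (-(1/2) : ℝ)) ∧
      2 * (1 + (1/20) * μ) ^ (-(1/2) : ℝ) * ellK ((1 + (1/20) * μ) ^ (-(1/2) : ℝ)) <
        π * Real.log (640 / μ) := by
  obtain ⟨hμ0, hμ1⟩ := hμ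
  set A : ℝ := 1 + (1/20) * μ with hAdef
  have hA1 : 1 < A := by rw [hAdef]; linarith
  have hA0 : (0:ℝ) < A := by linarith
  have hA2 : A ≤ 21/20 := by rw [hAdef]; linarith
  set m : ℝ := A ^ (-(1/2) : ℝ) with hmdef
  have hm0 : 0 < m := Real.rpow_pos_of_pos hA0 _
  have hm1 : m < 1 := Real.rpow_lt_one_of_one_lt_of_neg hA1 (by norm_num)
  have hmsq : m ^ 2 = 1 / A := by
    rw [hmdef, ← Real.rpow_natCast (A ^ (-(1/2) : ℝ)) 2, ← Real.rpow_mul hA0.le]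
    norm_num
    rw [Real.rpow_neg hA0.le, Real.rpow_one]
  have hmhalf : 1/2 ≤ m ^ 2 := by
    rw [hmsq]
    rw [le_div_iff₀ hA0]
    linarith
  have hm9 : 9/10 ≤ m := by
    have hm2 : 20/21 ≤ m ^ 2 := by
      rw [hmsq, le_div_iff₀ hA0]
      linarith
    nlinarith [hm2, hm0]
  have h1m : 0 < 1 - m ^ 2 := by nlinarith
  set c : ℝ := Real.sqrt (1 - m ^ 2) with hcdef
  have hc0 : 0 < c := Real.sqrt_pos.mpr h1m
  have hc2 : c ^ 2 = 1 - m ^ 2 := Real.sq_sqrt h1m.le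
  have hc2A : c ^ 2 * A = μ / 20 := by
    rw [hc2, hmsq]
    field_simp
    ring
  have hc2le : c ^ 2 ≤ μ / 20 := by nlinarith [sq_nonneg c]
  have hc2ge : μ / 21 ≤ c ^ 2 := by nlinarith [sq_nonneg c]
  have hcsmall : c ≤ 1/1000 := by nlinarith [hc0.le, hc2le]
  have hKlow := ellK_lower m hm0 hm1
  have hKup := ellK_upper m hm0 hm1 hmhalf
  rw [← hcdef] at hKlow hKup
  have hπ : 3.141592 < π := Real.pi_gt_d6
  constructor
  · -- lower bound
    have hE1 : Real.log (π / c) ≤ ellK m := by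
      calc Real.log (π / c) = Real.log (2 * ((π/2) / c)) := by
            rw [show 2 * ((π/2) / c) = π / c by ring]
        _ ≤ Real.arsinh ((π/2) / c) := log_le_arsinh _ (by positivity)
        _ ≤ ellK m := hKlow
    have l2 : (1/2) * Real.log (197/μ) ≤ Real.log (π / c) := by
      have hsq : 197/μ ≤ (π / c) ^ 2 := by
        rw [div_pow, div_le_div_iff₀ hμ0 (by positivity)]
        have hπ2 : (9.85:ℝ) ≤ π ^ 2 := by nlinarith [hπ]
        nlinarith [hc2le, mul_le_mul_of_nonneg_right hπ2 hμ0.le]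
      have := Real.log_le_log (by positivity) hsq
      rw [Real.log_pow] at this
      push_cast at this
      linarith
    have l3 : 0 ≤ Real.log (197/μ) := by
      apply Real.log_nonneg
      rw [le_div_iff₀ hμ0]
      linarith
    have l4 : (3/4) * Real.log (320/μ) < (9/10) * Real.log (197/μ) := by
      rw [Real.log_div (by norm_num) (ne_of_gt hμ0),
        Real.log_div (by norm_num) (ne_of_gt hμ0)]
      have hlμ : Real.log μ < 0 := Real.log_neg hμ0 (by linarith)
      have h15 : 15 * Real.log 320 ≤ 18 * Real.log 197 := by
        have h := Real.log_le_log (show (0:ℝ) < 320 ^ (15:ℕ) by positivity)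
          (show (320:ℝ) ^ (15:ℕ) ≤ 197 ^ (18:ℕ) by norm_num)
        rw [Real.log_pow, Real.log_pow] at h
        push_cast at h
        linarith
      linarith
    have p1 : 2 * m * Real.log (π / c) ≤ 2 * m * ellK m :=
      mul_le_mul_of_nonneg_left hE1 (by linarith)
    have p2 : 2 * m * ((1/2) * Real.log (197/μ)) ≤ 2 * m * Real.log (π / c) :=
      mul_le_mul_of_nonneg_left l2 (by linarith)
    have p3 : (9/10) * Real.log (197/μ) ≤ 2 * m * ((1/2) * Real.log (197/μ)) := by
      nlinarith [l3, hm9]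
    linarith
  · -- upper bound
    have hK0 : 0 ≤ ellK m := by
      rw [ellK]
      apply intervalIntegral.integral_nonneg (by positivity)
      intro x _
      positivity
    have hs2gt : 1 < Real.sqrt 2 := by
      nlinarith [Real.sq_sqrt (show (0:ℝ) ≤ 2 by norm_num), Real.sqrt_nonneg 2]
    have hyhalf : (1/2 : ℝ) ≤ Real.sqrt 2 / (2 * c) := by
      rw [le_div_iff₀ (by positivity)]
      nlinarith
    have hars : Real.arsinh (Real.sqrt 2 / (2 * c)) ≤ (1/2) * Real.log (168/μ) := by
      have h1 := arsinh_le_log _ hyhalf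
      have htsq : (4 * (Real.sqrt 2 / (2 * c))) ^ 2 ≤ 168/μ := by
        have heq : (4 * (Real.sqrt 2 / (2 * c))) ^ 2 = 8 / c ^ 2 := by
          rw [mul_pow, div_pow, Real.sq_sqrt (by norm_num : (0:ℝ) ≤ 2)]
          field_simp
          ring
        rw [heq, div_le_div_iff₀ (by positivity) hμ0]
        nlinarith [hc2ge]
      have ht0 : (0:ℝ) < 4 * (Real.sqrt 2 / (2 * c)) := by positivity
      have h2 : Real.log (4 * (Real.sqrt 2 / (2 * c)))
          = (1/2) * Real.log ((4 * (Real.sqrt 2 / (2 * c))) ^ 2) := by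
        rw [Real.log_pow]
        push_cast
        ring
      have h3 := Real.log_le_log (by positivity) htsq
      linarith
    have h168 : Real.log (168/μ) ≤ Real.log (640/μ) := by
      apply Real.log_le_log (by positivity)
      gcongr
      norm_num
    have hlge : 0 < Real.log (640/μ) := by
      apply Real.log_pos
      rw [lt_div_iff₀ hμ0]
      linarith
    have q1 : 2 * m * ellK m ≤ 2 * ellK m := by
      nlinarith [hK0, hm1, hm0]
    have q2 : 2 * ellK m ≤ 2 * ((π / Real.sqrt 2) * Real.arsinh (Real.sqrt 2 / (2 * c))) := by
      linarith
    have q3 : (π / Real.sqrt 2) * Real.arsinh (Real.sqrt 2 / (2 * c))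
        ≤ (π / Real.sqrt 2) * ((1/2) * Real.log (168/μ)) :=
      mul_le_mul_of_nonneg_left hars (by positivity)
    have q5 : (π / Real.sqrt 2) * Real.log (168/μ) ≤ (π / Real.sqrt 2) * Real.log (640/μ) :=
      mul_le_mul_of_nonneg_left h168 (by positivity)
    have q6 : (π / Real.sqrt 2) * Real.log (640/μ) < π * Real.log (640/μ) :=
      mul_lt_mul_of_pos_right (div_lt_self Real.pi_pos hs2gt) hlge
    nlinarith [q1, q2, q3, q5, q6]
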